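/- Fix c₂ > β and suppose (H(c₂) − H(0))/(c₂ − β) < H'(0). Then there exists c₁ ∈ (0, c₂ − β) such that g(c₁, c₂) < g(0, c₂); in particular, (0, c₂) is not a minimizer of g over D. -/

import Mathlib

theorem stmt_16
    (H H' : ℝ → ℝ)
    (hHcont : ContinuousOn H (Set.Ici 0))
    (hHderiv : ∀ x ∈ Set.Ioi (0:ℝ), HasDerivAt H (H' x) x)
    (hH'pos : ∀ x ∈ Set.Ioi (0:ℝ), 0 < H' x)
    (hH'cont : ContinuousOn H' (Set.Ici 0))
    (hH'top : Filter.Tendsto H' Filter.atTop Filter.atTop)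
    (β : ℝ) (hβ : 0 < β)
    (c₂ : ℝ) (hc₂ : β < c₂) (hlt : (H c₂ - H 0) / (c₂ - β) < H' 0)
    :
    (∃ c₁ : ℝ, 0 < c₁ ∧ c₁ < c₂ - β ∧
      (H c₂ - H c₁) / (c₂ - c₁ - β) < (H c₂ - H 0) / (c₂ - β)) ∧
      ¬ ∀ d₁ d₂ : ℝ, 0 ≤ d₁ → d₁ + β < d₂ →
        (H c₂ - H 0) / (c₂ - 0 - β) ≤ (H d₂ - H d₁) / (d₂ - d₁ - β) := by
  set m : ℝ := (H c₂ - H 0) / (c₂ - β) with hm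
  have hpos : (0:ℝ) < c₂ - β := by linarith
  -- H' > m near 0 within Ici 0
  have hev : ∀ᶠ x in nhdsWithin 0 (Set.Ici (0:ℝ)), m < H' x :=
    (hH'cont 0 (Set.mem_Ici.mpr le_rfl)).eventually (eventually_gt_nhds hlt)
  rw [Filter.Eventually, Metric.mem_nhdsWithin_iff] at hev
  obtain ⟨δ, hδ, hδ'⟩ := hev
  set c₁ : ℝ := min (δ/2) ((c₂ - β)/2) with hc₁def
  have hc₁pos : 0 < c₁ := lt_min (by linarith) (by linarith)
  have hc₁lt : c₁ < c₂ - β := lt_of_le_of_lt (min_le_right _ _) (by linarith)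
  have hc₁δ : c₁ ≤ δ/2 := min_le_left _ _
  -- MVT on [0, c₁]
  obtain ⟨ξ, hξ, hξ'⟩ := exists_hasDerivAt_eq_slope H H' hc₁pos
    (hHcont.mono (by intro x hx; exact hx.1))
    (fun x hx => hHderiv x hx.1)
  have hξ0 : (0:ℝ) ≤ ξ := le_of_lt hξ.1
  have hξδ : dist ξ 0 < δ := by
    rw [Real.dist_eq, sub_zero, abs_of_nonneg hξ0]
    have := hξ.2
    linarith [hc₁δ]
  have hslope : m < (H c₁ - H 0) / (c₁ - 0) := by
    rw [← hξ']
    exact hδ' ⟨Metric.mem_ball.mpr hξδ, hξ0⟩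
  rw [sub_zero] at hslope
  have hkey : m * c₁ < H c₁ - H 0 := (lt_div_iff₀ hc₁pos).mp hslope
  have hmain : (H c₂ - H c₁) / (c₂ - c₁ - β) < m := by
    rw [div_lt_iff₀ (by linarith)]
    have hmval : m * (c₂ - β) = H c₂ - H 0 := by
      rw [hm, div_mul_cancel₀ _ hpos.ne']
    nlinarith
  constructor
  · exact ⟨c₁, hc₁pos, hc₁lt, hmain⟩
  · intro hall
    have := hall c₁ c₂ (le_of_lt hc₁pos) (by linarith)
    rw [sub_zero] at this
    exact absurd this (not_le.mpr hmain)
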